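/- arXiv:2410.14819 — 2 statements merged into one kernel-verified Lean document; each statement's English description precedes it below -/
import Mathlib

section
/- For n odd, define F_n ∈ B_{n+1} by F_n = Σ_ℓ Σ_{ε_n, ε_{n+1}} d [λ¹(t(ε_n)) λ¹(t(ε_{n+1}))]^{1/2} / λ⁰(s(ε_n)) · [ℓ ε_n ε_n* ε_{n+1} ε_{n+1}* ℓ*], where ℓ ranges over paths of length n from ⋆ staying in Γ, and ε_n, ε_{n+1} range over edges with source t(ℓ). Then d⁻¹F_n is a self-adjoint idempotent: (d⁻¹F_n)² = d⁻¹F_n and (d⁻¹F_n)* = d⁻¹F_n. -/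
noncomputable section

open scoped BigOperators

/-- A finite bipartite multigraph: even vertices `Vp`, odd vertices `Vm`,
edges directed from even to odd vertices. -/
structure BGraph where
  Vp : Type
  Vm : Type
  E : Type
  [fVp : Fintype Vp]
  [fVm : Fintype Vm]
  [fE : Fintype E]
  [dVp : DecidableEq Vp]
  [dVm : DecidableEq Vm]
  [dE : DecidableEq E]
  src : E → Vp
  tgt : E → Vm

attribute [instance] BGraph.fVp BGraph.fVm BGraph.fE BGraph.dVp BGraph.dVm BGraph.dE

namespace BGraph

/-- Connectedness of a bipartite multigraph. -/
def Conn (Γ : BGraph) : Prop :=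
  ∀ (S : Finset Γ.Vp) (T : Finset Γ.Vm),
    (∀ ε : Γ.E, (Γ.src ε ∈ S ↔ Γ.tgt ε ∈ T)) →
    (S = ∅ ∧ T = ∅) ∨ (S = Finset.univ ∧ T = Finset.univ)

/-- Compatibility of consecutive edges of an alternating path
`ε₁ε₂*ε₃ε₄*⋯` (0-based: edges at even positions are traversed forwards,
edges at odd positions backwards). -/
def Compatible (Γ : BGraph) (n : ℕ) (f : Fin n → Γ.E) : Prop :=
  ∀ i j : Fin n, (j : ℕ) = (i : ℕ) + 1 →
    (((i : ℕ) % 2 = 0 → Γ.tgt (f i) = Γ.tgt (f j)) ∧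
     ((i : ℕ) % 2 = 1 → Γ.src (f i) = Γ.src (f j)))

instance {Γ : BGraph} (n : ℕ) : DecidablePred (Γ.Compatible n) := fun _ => by
  unfold Compatible; infer_instance

/-- A pair (base vertex, list of edges) is a valid alternating path if it starts
at the base vertex and consecutive edges match up. -/
def PathOk (Γ : BGraph) (n : ℕ) (p : Γ.Vp × (Fin n → Γ.E)) : Prop :=
  (∀ i : Fin n, (i : ℕ) = 0 → Γ.src (p.2 i) = p.1) ∧ Γ.Compatible n p.2

instance {Γ : BGraph} (n : ℕ) : DecidablePred (Γ.PathOk n) := fun _ => by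
  unfold PathOk; infer_instance

/-- Alternating paths of length `n` in `Γ` starting at an even vertex. -/
def GPath (Γ : BGraph) (n : ℕ) := {p : Γ.Vp × (Fin n → Γ.E) // Γ.PathOk n p}

instance {Γ : BGraph} (n : ℕ) : Fintype (Γ.GPath n) := Subtype.fintype _
instance {Γ : BGraph} (n : ℕ) : DecidableEq (Γ.GPath n) :=
  inferInstanceAs (DecidableEq {p : Γ.Vp × (Fin n → Γ.E) // Γ.PathOk n p})

/-- Starting (even) vertex of a path. -/
def pstart (Γ : BGraph) {n : ℕ} (p : Γ.GPath n) : Γ.Vp := p.1.1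

/-- Endpoint of a path (an even vertex if the length is even, odd otherwise). -/
def pend (Γ : BGraph) : {n : ℕ} → Γ.GPath n → Γ.Vp ⊕ Γ.Vm
  | 0, p => Sum.inl p.1.1
  | (k+1), p =>
      if (k+1) % 2 = 1 then Sum.inr (Γ.tgt (p.1.2 ⟨k, Nat.lt_succ_self k⟩))
      else Sum.inl (Γ.src (p.1.2 ⟨k, Nat.lt_succ_self k⟩))

/-- Last edge of a path of positive length. -/
def lastEdge (Γ : BGraph) {n : ℕ} (p : Γ.GPath (n+1)) : Γ.E :=
  p.1.2 ⟨n, Nat.lt_succ_self n⟩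

theorem pend_eq_last (Γ : BGraph) {n : ℕ} (p : Γ.GPath (n+1)) :
    Γ.pend p = if (n+1) % 2 = 1 then Sum.inr (Γ.tgt (Γ.lastEdge p))
      else Sum.inl (Γ.src (Γ.lastEdge p)) := rfl

/-- Loops of length `2n` based at an even vertex, written as a pair of paths
`[ℓ₁ℓ₂*]` with common start and common end. -/
def GLoop (Γ : BGraph) (n : ℕ) :=
  {q : Γ.GPath n × Γ.GPath n // Γ.pstart q.1 = Γ.pstart q.2 ∧ Γ.pend q.1 = Γ.pend q.2}

instance {Γ : BGraph} (n : ℕ) : Fintype (Γ.GLoop n) := by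
  unfold GLoop; infer_instance
instance {Γ : BGraph} (n : ℕ) : DecidableEq (Γ.GLoop n) := by
  unfold GLoop; infer_instance

/-- The loop algebra `G_{n,+}`: formal complex linear combinations of loops. -/
abbrev LoopAlg (Γ : BGraph) (n : ℕ) := Γ.GLoop n → ℂ

/-- Multiplication of the loop algebra : `[ℓ₁ℓ₂*]·[ℓ₃ℓ₄*] = δ_{ℓ₂,ℓ₃}[ℓ₁ℓ₄*]`. -/
def lmul (Γ : BGraph) {n : ℕ} (x y : Γ.LoopAlg n) : Γ.LoopAlg n := fun q =>
  ∑ p : Γ.GPath n,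
    if h : Γ.pstart q.1.1 = Γ.pstart p ∧ Γ.pend q.1.1 = Γ.pend p then
      x ⟨(q.1.1, p), h⟩ *
      y ⟨(p, q.1.2), ⟨h.1.symm.trans q.2.1, h.2.symm.trans q.2.2⟩⟩
    else 0

/-- The unit of the loop algebra: the sum `∑_p [p p*]` over all paths `p`. -/
def lone (Γ : BGraph) (n : ℕ) : Γ.LoopAlg n := fun q =>
  if q.1.1 = q.1.2 then 1 else 0

/-- The involution of the loop algebra: antilinear extension of loop reversal
`[ℓ₁ℓ₂*]* = [ℓ₂ℓ₁*]`. -/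
def lstar (Γ : BGraph) {n : ℕ} (x : Γ.LoopAlg n) : Γ.LoopAlg n := fun q =>
  starRingEnd ℂ (x ⟨(q.1.2, q.1.1), ⟨q.2.1.symm, q.2.2.symm⟩⟩)

/-- Number of paths of length `n` ending at a given vertex. -/
def pcount (Γ : BGraph) (n : ℕ) (v : Γ.Vp ⊕ Γ.Vm) : ℕ :=
  Fintype.card {p : Γ.GPath n // Γ.pend p = v}

/-- Augmentation edges over an even vertex `v` : there are `m v` of them. -/
def Aug (Γ : BGraph) (m : Γ.Vp → ℕ) := Σ v : Γ.Vp, Fin (m v)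

instance {Γ : BGraph} (m : Γ.Vp → ℕ) : Fintype (Γ.Aug m) := by
  unfold Aug; infer_instance
instance {Γ : BGraph} (m : Γ.Vp → ℕ) : DecidableEq (Γ.Aug m) := by
  unfold Aug; infer_instance

/-- Loops of length `2n+2` in the augmented graph `Γ̃` based at `⋆` which stay
in `Γ` except for the first and last (augmentation) edge, written as a pair of
halves `(η, ℓ₁)`, `(ρ, ℓ₂)`. -/
def BLoopOk (Γ : BGraph) (m : Γ.Vp → ℕ) (n : ℕ)
    (q : (Γ.Aug m × Γ.GPath n) × (Γ.Aug m × Γ.GPath n)) : Prop :=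
  q.1.1.1 = Γ.pstart q.1.2 ∧ q.2.1.1 = Γ.pstart q.2.2 ∧ Γ.pend q.1.2 = Γ.pend q.2.2

def BLoop (Γ : BGraph) (m : Γ.Vp → ℕ) (n : ℕ) :=
  {q : (Γ.Aug m × Γ.GPath n) × (Γ.Aug m × Γ.GPath n) // Γ.BLoopOk m n q}

instance {Γ : BGraph} (m : Γ.Vp → ℕ) (n : ℕ) : Fintype (Γ.BLoop m n) := by
  unfold BLoop BLoopOk; infer_instance
instance {Γ : BGraph} (m : Γ.Vp → ℕ) (n : ℕ) : DecidableEq (Γ.BLoop m n) := by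
  unfold BLoop; infer_instance

/-- The loop algebra `B_n` of the augmented graph. -/
abbrev BAlg (Γ : BGraph) (m : Γ.Vp → ℕ) (n : ℕ) := Γ.BLoop m n → ℂ

/-- Multiplication `[ℓ₁ℓ₂*]·[ℓ₃ℓ₄*] = δ_{ℓ₂,ℓ₃}[ℓ₁ℓ₄*]` of `B_n`. -/
def bmul (Γ : BGraph) (m : Γ.Vp → ℕ) {n : ℕ} (x y : Γ.BAlg m n) : Γ.BAlg m n := fun q =>
  ∑ a : Γ.Aug m, ∑ p : Γ.GPath n,
    if h : a.1 = Γ.pstart p ∧ Γ.pend q.1.1.2 = Γ.pend p then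
      x ⟨(q.1.1, (a, p)), ⟨q.2.1, h.1, h.2⟩⟩ *
      y ⟨((a, p), q.1.2), ⟨h.1, q.2.2.1, h.2.symm.trans q.2.2.2⟩⟩
    else 0

/-- The unit of `B_n`. -/
def bone (Γ : BGraph) (m : Γ.Vp → ℕ) (n : ℕ) : Γ.BAlg m n := fun q =>
  if q.1.1 = q.1.2 then 1 else 0

/-- The involution of `B_n`. -/
def bstar (Γ : BGraph) (m : Γ.Vp → ℕ) {n : ℕ} (x : Γ.BAlg m n) : Γ.BAlg m n := fun q =>
  starRingEnd ℂ (x ⟨(q.1.2, q.1.1), ⟨q.2.2.1, q.2.1, q.2.2.2.symm⟩⟩)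

/-- Truncation of a path, forgetting the last edge. -/
def trunc (Γ : BGraph) {n : ℕ} (p : Γ.GPath (n+1)) : Γ.GPath n :=
  ⟨(p.1.1, fun i => p.1.2 i.castSucc), by
    constructor
    · intro i hi0
      exact p.2.1 i.castSucc (by simpa using hi0)
    · intro i j hij
      have := p.2.2 i.castSucc j.castSucc (by simpa using hij)
      simpa using this⟩

theorem pend_trunc_of_last_eq (Γ : BGraph) {n : ℕ} (p q : Γ.GPath (n+1))
    (hpq : Γ.pend p = Γ.pend q) (hl : Γ.lastEdge p = Γ.lastEdge q) :
    Γ.pend (Γ.trunc p) = Γ.pend (Γ.trunc q) := by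
  cases n with
  | zero =>
    have hp := p.2.1 ⟨0, Nat.zero_lt_one⟩ rfl
    have hq := q.2.1 ⟨0, Nat.zero_lt_one⟩ rfl
    have hbase : p.1.1 = q.1.1 := by
      rw [← hp, ← hq]; exact congrArg Γ.src hl
    show Sum.inl p.1.1 = Sum.inl q.1.1
    rw [hbase]
  | succ k =>
    have cp := p.2.2 ⟨k, by omega⟩ ⟨k+1, by omega⟩ rfl
    have cq := q.2.2 ⟨k, by omega⟩ ⟨k+1, by omega⟩ rfl
    have hl' : p.1.2 ⟨k+1, by omega⟩ = q.1.2 ⟨k+1, by omega⟩ := hl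
    have ep : Γ.pend (Γ.trunc p) =
        (if (k+1) % 2 = 1 then Sum.inr (Γ.tgt (p.1.2 ⟨k, by omega⟩))
         else Sum.inl (Γ.src (p.1.2 ⟨k, by omega⟩))) := rfl
    have eq' : Γ.pend (Γ.trunc q) =
        (if (k+1) % 2 = 1 then Sum.inr (Γ.tgt (q.1.2 ⟨k, by omega⟩))
         else Sum.inl (Γ.src (q.1.2 ⟨k, by omega⟩))) := rfl
    rw [ep, eq']
    by_cases hk : (k+1) % 2 = 1
    · have hk0 : k % 2 = 0 := by omega
      rw [if_pos hk, if_pos hk, cp.1 hk0, cq.1 hk0, hl']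
    · have hk1 : k % 2 = 1 := by omega
      rw [if_neg hk, if_neg hk, cp.2 hk1, cq.2 hk1, hl']

/-- The inclusion `ι : B_n → B_{n+1}`, `[ℓ₁ℓ₂*] ↦ ∑_ε [ℓ₁εε*ℓ₂*]`. -/
def bincl (Γ : BGraph) (m : Γ.Vp → ℕ) {n : ℕ} (x : Γ.BAlg m n) : Γ.BAlg m (n+1) := fun q =>
  if h : Γ.lastEdge q.1.1.2 = Γ.lastEdge q.1.2.2 then
    x ⟨((q.1.1.1, Γ.trunc q.1.1.2), (q.1.2.1, Γ.trunc q.1.2.2)),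
      ⟨q.2.1, q.2.2.1, Γ.pend_trunc_of_last_eq _ _ q.2.2.2 h⟩⟩
  else 0

/-- Iterated inclusion `B_a → B_b` for `a ≤ b`. -/
def binclLe (Γ : BGraph) (m : Γ.Vp → ℕ) {a b : ℕ} (h : a ≤ b) (x : Γ.BAlg m a) :
    Γ.BAlg m b :=
  Nat.leRecOn h (fun {_} y => Γ.bincl m y) x

/-- An edge `ε` can be appended to the path `p`. -/
def Matches (Γ : BGraph) {n : ℕ} (p : Γ.GPath n) (ε : Γ.E) : Prop :=
  (n % 2 = 0 → Γ.pend p = Sum.inl (Γ.src ε)) ∧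
  (n % 2 = 1 → Γ.pend p = Sum.inr (Γ.tgt ε))

instance {Γ : BGraph} {n : ℕ} (p : Γ.GPath n) (ε : Γ.E) : Decidable (Γ.Matches p ε) := by
  unfold Matches; infer_instance

theorem matches_congr (Γ : BGraph) {n : ℕ} {p p' : Γ.GPath n}
    (h : Γ.pend p = Γ.pend p') {ε : Γ.E} (hm : Γ.Matches p ε) : Γ.Matches p' ε :=
  ⟨fun h0 => h.symm.trans (hm.1 h0), fun h1 => h.symm.trans (hm.2 h1)⟩

/-- For paths of positive length, the endpoint in terms of the last edge. -/
theorem pend_pos (Γ : BGraph) {n : ℕ} (p : Γ.GPath n) (hpos : 0 < n) :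
    Γ.pend p = if n % 2 = 1 then Sum.inr (Γ.tgt (p.1.2 ⟨n-1, by omega⟩))
      else Sum.inl (Γ.src (p.1.2 ⟨n-1, by omega⟩)) := by
  cases n with
  | zero => omega
  | succ k => rfl

/-- Appending an edge to a path. -/
def psnoc (Γ : BGraph) {n : ℕ} (p : Γ.GPath n) (ε : Γ.E) (h : Γ.Matches p ε) :
    Γ.GPath (n+1) :=
  ⟨(p.1.1, Fin.snoc p.1.2 ε), by
    constructor
    · intro i hi0
      dsimp only
      by_cases hin : (i : ℕ) < n
      · have hi' : i = Fin.castSucc ⟨(i : ℕ), hin⟩ := by ext; simp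
        rw [hi', Fin.snoc_castSucc]
        exact p.2.1 ⟨(i : ℕ), hin⟩ hi0
      · have hn0 : n = 0 := by have := i.isLt; omega
        subst hn0
        have hi' : i = Fin.last 0 := by ext; simpa using hi0
        rw [hi', Fin.snoc_last]
        have h0 : (Sum.inl p.1.1 : Γ.Vp ⊕ Γ.Vm) = Sum.inl (Γ.src ε) := h.1 rfl
        exact (Sum.inl.inj h0).symm
    · intro i j hij
      dsimp only
      by_cases hjn : (j : ℕ) < n
      · have hin : (i : ℕ) < n := by omega
        have hi' : i = Fin.castSucc ⟨(i : ℕ), hin⟩ := by ext; simp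
        have hj' : j = Fin.castSucc ⟨(j : ℕ), hjn⟩ := by ext; simp
        rw [hi', hj', Fin.snoc_castSucc, Fin.snoc_castSucc]
        exact p.2.2 ⟨(i : ℕ), hin⟩ ⟨(j : ℕ), hjn⟩ hij
      · have hjn' : (j : ℕ) = n := by have := j.isLt; omega
        have hin : (i : ℕ) < n := by omega
        have hpos : 0 < n := by omega
        have hpend := Γ.pend_pos p hpos
        have hidx : (⟨n-1, by omega⟩ : Fin n) = ⟨(i : ℕ), hin⟩ := by
          ext; simp; omega
        rw [hidx] at hpend
        have hi' : i = Fin.castSucc ⟨(i : ℕ), hin⟩ := by ext; simp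
        have hj' : j = Fin.last n := by ext; simpa using hjn'
        rw [hi', hj', Fin.snoc_castSucc, Fin.snoc_last]
        constructor
        · intro hpar
          have hn2 : n % 2 = 1 := by omega
          have hmm := h.2 hn2
          rw [hpend, if_pos hn2] at hmm
          exact Sum.inr.inj hmm
        · intro hpar
          have hn2 : n % 2 = 0 := by omega
          have hn2' : ¬ n % 2 = 1 := by omega
          have hmm := h.1 hn2
          rw [hpend, if_neg hn2'] at hmm
          exact Sum.inl.inj hmm⟩

theorem pend_psnoc (Γ : BGraph) {n : ℕ} (p : Γ.GPath n) (ε : Γ.E) (h : Γ.Matches p ε) :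
    Γ.pend (Γ.psnoc p ε h) =
      if (n+1) % 2 = 1 then Sum.inr (Γ.tgt ε) else Sum.inl (Γ.src ε) := by
  have hlast : Γ.lastEdge (Γ.psnoc p ε h) = ε := by
    unfold lastEdge psnoc
    dsimp only
    exact Fin.snoc_last _ _
  rw [Γ.pend_eq_last, hlast]

/-- The trace-preserving conditional expectation `B_{n+1} → B_n` (Jones–Penneys
formula). -/
def bCondExp (Γ : BGraph) (m : Γ.Vp → ℕ) (l0 : Γ.Vp → ℝ) (l1 : Γ.Vm → ℝ) (d : ℝ)
    {n : ℕ} (x : Γ.BAlg m (n+1)) : Γ.BAlg m n := fun q =>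
  ∑ ε : Γ.E,
    if h : Γ.Matches q.1.1.2 ε then
      (((if (n+1) % 2 = 0 then (d ^ 2)⁻¹ * l0 (Γ.src ε) / l1 (Γ.tgt ε)
          else l1 (Γ.tgt ε) / l0 (Γ.src ε)) : ℝ) : ℂ) *
      x ⟨((q.1.1.1, Γ.psnoc q.1.1.2 ε h),
          (q.1.2.1, Γ.psnoc q.1.2.2 ε (Γ.matches_congr q.2.2.2 h))),
        ⟨q.2.1, q.2.2.1, by rw [Γ.pend_psnoc, Γ.pend_psnoc]⟩⟩
    else 0

/-- The trace vector of `B_n` : `λⁿ = d⁻ⁿλ⁰` on even vertices and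
`d^{1-n}λ¹` on odd vertices. -/
def lamN (Γ : BGraph) (l0 : Γ.Vp → ℝ) (l1 : Γ.Vm → ℝ) (d : ℝ) (n : ℕ) :
    Γ.Vp ⊕ Γ.Vm → ℝ
  | Sum.inl u => d ^ (-(n : ℤ)) * l0 u
  | Sum.inr v => d ^ (1 - (n : ℤ)) * l1 v

/-- The trace on `B_n` with weight `w` : `tr([ℓ₁ℓ₂*]) = δ_{ℓ₁,ℓ₂} w(t(ℓ₁))`. -/
def btr (Γ : BGraph) (m : Γ.Vp → ℕ) {n : ℕ} (w : Γ.Vp ⊕ Γ.Vm → ℝ)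
    (x : Γ.BAlg m n) : ℂ :=
  ∑ L : Γ.BLoop m n, if L.1.1 = L.1.2 then x L * ((w (Γ.pend L.1.1.2) : ℝ) : ℂ) else 0

/-- The Jones projection element `F_n ∈ B_{n+1}`:
`F_n = ∑_ℓ ∑_{ε,ε'} c(ε,ε') [ℓ ε ε* ε' ε'* ℓ*]`. -/
def FJones (Γ : BGraph) (m : Γ.Vp → ℕ) (l0 : Γ.Vp → ℝ) (l1 : Γ.Vm → ℝ) (d : ℝ)
    (n : ℕ) : Γ.BAlg m (n+1) := fun L =>
  if L.1.1.1 = L.1.2.1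
      ∧ (∀ i : Fin (n+1), (i : ℕ) + 1 < n → L.1.1.2.1.2 i = L.1.2.2.1.2 i)
      ∧ (∀ i j : Fin (n+1), (i : ℕ) + 1 = n → (j : ℕ) = n →
          L.1.1.2.1.2 i = L.1.1.2.1.2 j ∧ L.1.2.2.1.2 i = L.1.2.2.1.2 j) then
    (((if n % 2 = 1 then
        d * Real.sqrt (l1 (Γ.tgt (Γ.lastEdge L.1.1.2)) * l1 (Γ.tgt (Γ.lastEdge L.1.2.2)))
          / l0 (Γ.src (Γ.lastEdge L.1.1.2))
      else
        Real.sqrt (l0 (Γ.src (Γ.lastEdge L.1.1.2)) * l0 (Γ.src (Γ.lastEdge L.1.2.2)))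
          / (d * l1 (Γ.tgt (Γ.lastEdge L.1.1.2)))) : ℝ) : ℂ)
  else 0

/-- The length-one path determined by an edge. -/
def mkPath1 (Γ : BGraph) (ε : Γ.E) : Γ.GPath 1 :=
  ⟨(Γ.src ε, fun _ => ε), by
    constructor
    · intro _ _; rfl
    · intro i j hij
      exfalso
      have := i.isLt; have := j.isLt; omega⟩

/-- The adjacency matrix of `Γ` (entries: numbers of edges). -/
def adjMat (Γ : BGraph) : Matrix Γ.Vp Γ.Vm ℝ :=
  Matrix.of fun u w => (Fintype.card {ε : Γ.E // Γ.src ε = u ∧ Γ.tgt ε = w} : ℝ)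

end BGraph
namespace BGraph

theorem pend_odd (Γ : BGraph) {n : ℕ} (hn : n % 2 = 1) (p : Γ.GPath (n+1)) :
    Γ.pend p = Sum.inl (Γ.src (Γ.lastEdge p)) := by
  rw [Γ.pend_eq_last, if_neg (by omega)]

/-- The data of the path obtained from `p1` by replacing its last two edges by `ε`. -/
def pdata (Γ : BGraph) {n : ℕ} (p1 : Γ.GPath (n+1)) (ε : Γ.E) :
    Γ.Vp × (Fin (n+1) → Γ.E) :=
  (p1.1.1, fun i => if (i : ℕ) + 1 < n then p1.1.2 i else ε)

theorem pdata_ok (Γ : BGraph) {n : ℕ} (hn : n % 2 = 1) (p1 : Γ.GPath (n+1))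
    (hl : p1.1.2 ⟨n-1, by omega⟩ = p1.1.2 ⟨n, by omega⟩) (ε : Γ.E)
    (hε : Γ.src ε = Γ.src (Γ.lastEdge p1)) : Γ.PathOk (n+1) (Γ.pdata p1 ε) := by
  constructor
  · intro i hi0
    show Γ.src (if (i : ℕ) + 1 < n then p1.1.2 i else ε) = p1.1.1
    by_cases h : (i : ℕ) + 1 < n
    · rw [if_pos h]; exact p1.2.1 i hi0
    · rw [if_neg h]
      have hn1 : n = 1 := by omega
      subst hn1
      have h0 : Γ.src (p1.1.2 ⟨0, by omega⟩) = p1.1.1 := p1.2.1 ⟨0, by omega⟩ rfl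
      rw [hε]
      have : Γ.lastEdge p1 = p1.1.2 ⟨1, by omega⟩ := rfl
      rw [this, ← hl]
      exact h0
  · intro i j hij
    show (((i : ℕ) % 2 = 0 → Γ.tgt (if (i : ℕ) + 1 < n then p1.1.2 i else ε) =
            Γ.tgt (if (j : ℕ) + 1 < n then p1.1.2 j else ε)) ∧
          ((i : ℕ) % 2 = 1 → Γ.src (if (i : ℕ) + 1 < n then p1.1.2 i else ε) =
            Γ.src (if (j : ℕ) + 1 < n then p1.1.2 j else ε)))
    by_cases hi : (i : ℕ) + 1 < n
    · rw [if_pos hi]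
      by_cases hj : (j : ℕ) + 1 < n
      · rw [if_pos hj]; exact p1.2.2 i j hij
      · rw [if_neg hj]
        -- here j = i+1 = n-1, i = n-2, i odd
        have hiv : (i : ℕ) = n - 2 := by omega
        constructor
        · intro h0; exfalso; omega
        · intro _
          have hcomp := (p1.2.2 i ⟨(i : ℕ) + 1, by omega⟩ rfl).2 (by omega)
          have hidx : (⟨(i : ℕ) + 1, by omega⟩ : Fin (n+1)) = ⟨n - 1, by omega⟩ := by
            ext; simp; omega
          rw [hidx] at hcomp
          rw [hcomp, hl, hε]
          rfl
    · rw [if_neg hi]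
      have hjv : ¬ ((j : ℕ) + 1 < n) := by omega
      rw [if_neg hjv]
      have hiv : (i : ℕ) = n - 1 ∨ (i : ℕ) = n := by omega
      constructor
      · intro _; rfl
      · intro h1; exfalso
        have := j.isLt; omega

/-- The path obtained from `p1` by replacing its last two edges by `ε`. -/
def mkP (Γ : BGraph) {n : ℕ} (hn : n % 2 = 1) (p1 : Γ.GPath (n+1))
    (hl : p1.1.2 ⟨n-1, by omega⟩ = p1.1.2 ⟨n, by omega⟩) (ε : Γ.E)
    (hε : Γ.src ε = Γ.src (Γ.lastEdge p1)) : Γ.GPath (n+1) :=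
  ⟨Γ.pdata p1 ε, Γ.pdata_ok hn p1 hl ε hε⟩

theorem pdata_last (Γ : BGraph) {n : ℕ} (p1 : Γ.GPath (n+1)) (ε : Γ.E) :
    (Γ.pdata p1 ε).2 ⟨n, by omega⟩ = ε := by
  show (if n + 1 < n then p1.1.2 _ else ε) = ε
  rw [if_neg (by omega)]

/-- The condition appearing in `FJones`. -/
def FCond (Γ : BGraph) (m : Γ.Vp → ℕ) (n : ℕ) (L : Γ.BLoop m (n+1)) : Prop :=
  L.1.1.1 = L.1.2.1
    ∧ (∀ i : Fin (n+1), (i : ℕ) + 1 < n → L.1.1.2.1.2 i = L.1.2.2.1.2 i)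
    ∧ (∀ i j : Fin (n+1), (i : ℕ) + 1 = n → (j : ℕ) = n →
        L.1.1.2.1.2 i = L.1.1.2.1.2 j ∧ L.1.2.2.1.2 i = L.1.2.2.1.2 j)

theorem FJones_pos (Γ : BGraph) (m : Γ.Vp → ℕ) (l0 : Γ.Vp → ℝ) (l1 : Γ.Vm → ℝ)
    (d : ℝ) {n : ℕ} (hn : n % 2 = 1) (L : Γ.BLoop m (n+1)) (h : Γ.FCond m n L) :
    Γ.FJones m l0 l1 d n L =
      (((d * Real.sqrt (l1 (Γ.tgt (Γ.lastEdge L.1.1.2)) * l1 (Γ.tgt (Γ.lastEdge L.1.2.2)))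
          / l0 (Γ.src (Γ.lastEdge L.1.1.2))) : ℝ) : ℂ) := by
  unfold FJones
  simp only [FCond] at h
  rw [if_pos h, if_pos hn]

theorem FJones_neg (Γ : BGraph) (m : Γ.Vp → ℕ) (l0 : Γ.Vp → ℝ) (l1 : Γ.Vm → ℝ)
    (d : ℝ) {n : ℕ} (L : Γ.BLoop m (n+1)) (h : ¬ Γ.FCond m n L) :
    Γ.FJones m l0 l1 d n L = 0 := by
  unfold FJones
  simp only [FCond] at h
  rw [if_neg h]

end BGraph

/-- For `n` odd, with
`F_n = ∑_ℓ ∑_{ε_n,ε_{n+1}} d [λ¹(t(ε_n))λ¹(t(ε_{n+1}))]^{1/2} / λ⁰(s(ε_n)) ·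
[ℓ ε_n ε_n* ε_{n+1} ε_{n+1}* ℓ*] ∈ B_{n+1}`, the element `d⁻¹F_n` is a
self-adjoint idempotent. -/
theorem statement9 (Γ : BGraph) (hconn : Γ.Conn) (m : Γ.Vp → ℕ)
    (hm : ∀ v, 0 < m v)
    (l0 : Γ.Vp → ℝ) (l1 : Γ.Vm → ℝ) (d : ℝ)
    (hl0 : ∀ u, 0 < l0 u) (hl1 : ∀ w, 0 < l1 w) (hd : 0 < d)
    (hrow : ∀ u : Γ.Vp, (∑ ε : Γ.E, if Γ.src ε = u then l1 (Γ.tgt ε) else 0) = l0 u)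
    (n : ℕ) (hn : n % 2 = 1) :
    Γ.bmul m ((d : ℂ)⁻¹ • Γ.FJones m l0 l1 d n) ((d : ℂ)⁻¹ • Γ.FJones m l0 l1 d n)
      = (d : ℂ)⁻¹ • Γ.FJones m l0 l1 d n ∧
    Γ.bstar m ((d : ℂ)⁻¹ • Γ.FJones m l0 l1 d n) = (d : ℂ)⁻¹ • Γ.FJones m l0 l1 d n := by
  have hd0 : d ≠ 0 := hd.ne'
  constructor
  · funext q
    obtain ⟨⟨⟨a1, p1⟩, ⟨a2, p2⟩⟩, hq1, hq2, hq3⟩ := q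
    by_cases hC : Γ.FCond m n ⟨((a1, p1), (a2, p2)), ⟨hq1, hq2, hq3⟩⟩
    case neg =>
      have hR : ((d : ℂ)⁻¹ • Γ.FJones m l0 l1 d n) ⟨((a1, p1), (a2, p2)), ⟨hq1, hq2, hq3⟩⟩ = 0 := by
        erw [Pi.smul_apply, smul_eq_mul, Γ.FJones_neg m l0 l1 d _ hC, mul_zero]
      rw [hR]
      show (∑ a : Γ.Aug m, ∑ p : Γ.GPath (n+1),
        if h : a.1 = Γ.pstart p ∧ Γ.pend p1 = Γ.pend p then
          ((d : ℂ)⁻¹ • Γ.FJones m l0 l1 d n) ⟨((a1, p1), (a, p)), ⟨hq1, h.1, h.2⟩⟩ *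
          ((d : ℂ)⁻¹ • Γ.FJones m l0 l1 d n) ⟨((a, p), (a2, p2)), ⟨h.1, hq2, h.2.symm.trans hq3⟩⟩
        else 0) = 0
      apply Finset.sum_eq_zero; intro a _
      apply Finset.sum_eq_zero; intro p _
      by_cases hcond : a.1 = Γ.pstart p ∧ Γ.pend p1 = Γ.pend p
      · rw [dif_pos hcond]
        by_cases hFC1 : Γ.FCond m n ⟨((a1, p1), (a, p)), ⟨hq1, hcond.1, hcond.2⟩⟩
        · by_cases hFC2 : Γ.FCond m n
              ⟨((a, p), (a2, p2)), ⟨hcond.1, hq2, hcond.2.symm.trans hq3⟩⟩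
          · exfalso
            obtain ⟨hb1, hb2, hb3⟩ := hFC1
            obtain ⟨hc1, hc2, hc3⟩ := hFC2
            exact hC ⟨hb1.trans hc1, fun i hi => (hb2 i hi).trans (hc2 i hi),
              fun i j hi hj => ⟨(hb3 i j hi hj).1, (hc3 i j hi hj).2⟩⟩
          · erw [Pi.smul_apply, Pi.smul_apply, smul_eq_mul, smul_eq_mul,
              Γ.FJones_neg m l0 l1 d _ hFC2, mul_zero, mul_zero]
        · erw [Pi.smul_apply, Pi.smul_apply, smul_eq_mul, smul_eq_mul,
            Γ.FJones_neg m l0 l1 d _ hFC1, mul_zero, zero_mul]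
      · rw [dif_neg hcond]
    case pos =>
      obtain ⟨hCa, hCe, hCl⟩ := id hC
      have hpl1 : p1.1.2 ⟨n - 1, by omega⟩ = p1.1.2 ⟨n, by omega⟩ :=
        (hCl ⟨n - 1, by omega⟩ ⟨n, by omega⟩ (by show n - 1 + 1 = n; omega) rfl).1
      have hpl2 : p2.1.2 ⟨n - 1, by omega⟩ = p2.1.2 ⟨n, by omega⟩ :=
        (hCl ⟨n - 1, by omega⟩ ⟨n, by omega⟩ (by show n - 1 + 1 = n; omega) rfl).2
      set A := l1 (Γ.tgt (Γ.lastEdge p1)) with hA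
      set B := l1 (Γ.tgt (Γ.lastEdge p2)) with hB
      set L0 := l0 (Γ.src (Γ.lastEdge p1)) with hL0
      set C : Γ.E → ℂ := fun ε =>
        (((d⁻¹ * (d * Real.sqrt (A * l1 (Γ.tgt ε)) / L0)) *
          (d⁻¹ * (d * Real.sqrt (l1 (Γ.tgt ε) * B) / L0)) : ℝ) : ℂ) with hCdef
      have key : ∀ (a : Γ.Aug m) (p : Γ.GPath (n+1)),
          (if h : a.1 = Γ.pstart p ∧ Γ.pend p1 = Γ.pend p then
            ((d : ℂ)⁻¹ • Γ.FJones m l0 l1 d n) ⟨((a1, p1), (a, p)), ⟨hq1, h.1, h.2⟩⟩ *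
            ((d : ℂ)⁻¹ • Γ.FJones m l0 l1 d n) ⟨((a, p), (a2, p2)), ⟨h.1, hq2, h.2.symm.trans hq3⟩⟩
          else 0) =
          ∑ ε : Γ.E, if (Γ.src ε = Γ.src (Γ.lastEdge p1) ∧ a = a1 ∧ p.1 = Γ.pdata p1 ε)
            then C ε else 0 := by
        intro a p
        by_cases hgood : Γ.src (Γ.lastEdge p) = Γ.src (Γ.lastEdge p1) ∧ a = a1 ∧
            p.1 = Γ.pdata p1 (Γ.lastEdge p)
        · obtain ⟨hg1, hg2, hg3⟩ := hgood
          have hRHS : (∑ ε : Γ.E,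
              if (Γ.src ε = Γ.src (Γ.lastEdge p1) ∧ a = a1 ∧ p.1 = Γ.pdata p1 ε)
              then C ε else 0) = C (Γ.lastEdge p) := by
            rw [Fintype.sum_eq_single (Γ.lastEdge p), if_pos ⟨hg1, hg2, hg3⟩]
            intro ε' hne
            rw [if_neg]
            rintro ⟨-, -, hdata⟩
            apply hne
            have h5 : p.1.2 ⟨n, by omega⟩ = ε' :=
              (congrFun (congrArg Prod.snd hdata) ⟨n, by omega⟩).trans (Γ.pdata_last p1 ε')
            exact h5.symm
          rw [hRHS]
          have hcond : a.1 = Γ.pstart p ∧ Γ.pend p1 = Γ.pend p := by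
            constructor
            · rw [hg2, hq1]
              exact (congrArg Prod.fst hg3).symm
            · rw [Γ.pend_odd hn p1, Γ.pend_odd hn p, hg1]
          rw [dif_pos hcond]
          have hFC1 : Γ.FCond m n ⟨((a1, p1), (a, p)), ⟨hq1, hcond.1, hcond.2⟩⟩ := by
            refine ⟨hg2.symm, ?_, ?_⟩
            · intro i hi
              have h6 := congrFun (congrArg Prod.snd hg3) i
              show p1.1.2 i = p.1.2 i
              rw [h6]
              show p1.1.2 i = if (i : ℕ) + 1 < n then p1.1.2 i else _
              rw [if_pos hi]
            · intro i j hi hj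
              refine ⟨(hCl i j hi hj).1, ?_⟩
              have h6i := congrFun (congrArg Prod.snd hg3) i
              have h6j := congrFun (congrArg Prod.snd hg3) j
              show p.1.2 i = p.1.2 j
              rw [h6i, h6j]
              show (if (i : ℕ) + 1 < n then p1.1.2 i else _) =
                (if (j : ℕ) + 1 < n then p1.1.2 j else _)
              rw [if_neg (by omega), if_neg (by omega)]
          have hFC2 : Γ.FCond m n
              ⟨((a, p), (a2, p2)), ⟨hcond.1, hq2, hcond.2.symm.trans hq3⟩⟩ := by
            refine ⟨hg2.trans hCa, ?_, ?_⟩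
            · intro i hi
              have h6 := congrFun (congrArg Prod.snd hg3) i
              show p.1.2 i = p2.1.2 i
              rw [h6]
              show (if (i : ℕ) + 1 < n then p1.1.2 i else _) = p2.1.2 i
              rw [if_pos hi]
              exact hCe i hi
            · intro i j hi hj
              refine ⟨?_, (hCl i j hi hj).2⟩
              have h6i := congrFun (congrArg Prod.snd hg3) i
              have h6j := congrFun (congrArg Prod.snd hg3) j
              show p.1.2 i = p.1.2 j
              rw [h6i, h6j]
              show (if (i : ℕ) + 1 < n then p1.1.2 i else _) =
                (if (j : ℕ) + 1 < n then p1.1.2 j else _)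
              rw [if_neg (by omega), if_neg (by omega)]
          erw [Pi.smul_apply, Pi.smul_apply, smul_eq_mul, smul_eq_mul,
            Γ.FJones_pos m l0 l1 d hn _ hFC1, Γ.FJones_pos m l0 l1 d hn _ hFC2]
          show (d : ℂ)⁻¹ * ((d * Real.sqrt (A * l1 (Γ.tgt (Γ.lastEdge p))) / L0 : ℝ) : ℂ) *
            ((d : ℂ)⁻¹ * ((d * Real.sqrt (l1 (Γ.tgt (Γ.lastEdge p)) * B) /
              l0 (Γ.src (Γ.lastEdge p)) : ℝ) : ℂ)) = C (Γ.lastEdge p)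
          rw [hg1, hCdef]
          push_cast
          ring
        · have hRHS : (∑ ε : Γ.E,
              if (Γ.src ε = Γ.src (Γ.lastEdge p1) ∧ a = a1 ∧ p.1 = Γ.pdata p1 ε)
              then C ε else 0) = 0 := by
            apply Finset.sum_eq_zero; intro ε _
            rw [if_neg]
            rintro ⟨h1, h2, h3⟩
            have hεl : Γ.lastEdge p = ε :=
              (congrFun (congrArg Prod.snd h3) ⟨n, by omega⟩).trans (Γ.pdata_last p1 ε)
            exact hgood ⟨by rw [hεl]; exact h1, h2, by rw [hεl]; exact h3⟩
          rw [hRHS]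
          by_cases hcond : a.1 = Γ.pstart p ∧ Γ.pend p1 = Γ.pend p
          · rw [dif_pos hcond]
            by_cases hFC1 : Γ.FCond m n ⟨((a1, p1), (a, p)), ⟨hq1, hcond.1, hcond.2⟩⟩
            · exfalso
              apply hgood
              obtain ⟨hb1, hb2, hb3⟩ := hFC1
              refine ⟨?_, ?_, ?_⟩
              · have h7 := hcond.2
                rw [Γ.pend_odd hn p1, Γ.pend_odd hn p] at h7
                exact (Sum.inl.inj h7).symm
              · exact hb1.symm
              · refine Prod.ext ?_ ?_
                · show p.1.1 = p1.1.1
                  have e1 : a.1 = p.1.1 := hcond.1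
                  have e2 : a1.1 = a.1 := congrArg Sigma.fst hb1
                  have e3 : a1.1 = p1.1.1 := hq1
                  rw [← e1, ← e2, e3]
                · funext i
                  show p.1.2 i = if (i : ℕ) + 1 < n then p1.1.2 i else Γ.lastEdge p
                  by_cases hi : (i : ℕ) + 1 < n
                  · rw [if_pos hi]
                    exact (hb2 i hi).symm
                  · rw [if_neg hi]
                    have hiv : (i : ℕ) = n - 1 ∨ (i : ℕ) = n := by
                      have := i.isLt; omega
                    rcases hiv with hiv | hiv
                    · exact (hb3 i ⟨n, Nat.lt_succ_self n⟩ (by omega) rfl).2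
                    · have : i = (⟨n, Nat.lt_succ_self n⟩ : Fin (n+1)) := by
                        apply Fin.ext; exact hiv
                      rw [this]
                      rfl
            · erw [Pi.smul_apply, Pi.smul_apply, smul_eq_mul, smul_eq_mul,
                Γ.FJones_neg m l0 l1 d _ hFC1, mul_zero, zero_mul]
          · rw [dif_neg hcond]
      have hbm : Γ.bmul m ((d : ℂ)⁻¹ • Γ.FJones m l0 l1 d n)
          ((d : ℂ)⁻¹ • Γ.FJones m l0 l1 d n) ⟨((a1, p1), (a2, p2)), ⟨hq1, hq2, hq3⟩⟩ =
          ∑ a : Γ.Aug m, ∑ p : Γ.GPath (n+1), ∑ ε : Γ.E,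
            if (Γ.src ε = Γ.src (Γ.lastEdge p1) ∧ a = a1 ∧ p.1 = Γ.pdata p1 ε)
            then C ε else 0 :=
        Finset.sum_congr rfl fun a _ => Finset.sum_congr rfl fun p _ => key a p
      rw [hbm]
      have hswap : (∑ a : Γ.Aug m, ∑ p : Γ.GPath (n+1), ∑ ε : Γ.E,
            if (Γ.src ε = Γ.src (Γ.lastEdge p1) ∧ a = a1 ∧ p.1 = Γ.pdata p1 ε)
            then C ε else 0) =
          ∑ ε : Γ.E, if Γ.src ε = Γ.src (Γ.lastEdge p1) then C ε else 0 := by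
        rw [show (∑ a : Γ.Aug m, ∑ p : Γ.GPath (n+1), ∑ ε : Γ.E,
            if (Γ.src ε = Γ.src (Γ.lastEdge p1) ∧ a = a1 ∧ p.1 = Γ.pdata p1 ε)
            then C ε else 0) = ∑ ε : Γ.E, ∑ a : Γ.Aug m, ∑ p : Γ.GPath (n+1),
            if (Γ.src ε = Γ.src (Γ.lastEdge p1) ∧ a = a1 ∧ p.1 = Γ.pdata p1 ε)
            then C ε else 0 from
          (Finset.sum_congr rfl fun a _ => Finset.sum_comm).trans Finset.sum_comm]
        refine Finset.sum_congr rfl fun ε _ => ?_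
        by_cases hε : Γ.src ε = Γ.src (Γ.lastEdge p1)
        · rw [if_pos hε]
          rw [Fintype.sum_eq_single a1 ?_]
          · rw [Fintype.sum_eq_single (Γ.mkP hn p1 hpl1 ε hε) ?_]
            · rw [if_pos ⟨hε, rfl, rfl⟩]
            · intro p hne
              rw [if_neg]
              rintro ⟨-, -, h3⟩
              exact hne (Subtype.ext h3)
          · intro a hne
            apply Finset.sum_eq_zero; intro p _
            rw [if_neg]
            rintro ⟨-, h2, -⟩
            exact hne h2
        · rw [if_neg hε]
          apply Finset.sum_eq_zero; intro a _
          apply Finset.sum_eq_zero; intro p _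
          rw [if_neg]
          rintro ⟨h1, -, -⟩
          exact hε h1
      rw [hswap]
      erw [Pi.smul_apply, smul_eq_mul, Γ.FJones_pos m l0 l1 d hn _ hC]
      have hLne : L0 ≠ 0 := (hl0 _).ne'
      have hreal : (∑ ε : Γ.E, if Γ.src ε = Γ.src (Γ.lastEdge p1) then
          ((d⁻¹ * (d * Real.sqrt (A * l1 (Γ.tgt ε)) / L0)) *
           (d⁻¹ * (d * Real.sqrt (l1 (Γ.tgt ε) * B) / L0))) else 0) =
          d⁻¹ * (d * Real.sqrt (A * B) / L0) := by
        have hpt : ∀ ε : Γ.E,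
            (if Γ.src ε = Γ.src (Γ.lastEdge p1) then
              ((d⁻¹ * (d * Real.sqrt (A * l1 (Γ.tgt ε)) / L0)) *
               (d⁻¹ * (d * Real.sqrt (l1 (Γ.tgt ε) * B) / L0))) else 0) =
            (if Γ.src ε = Γ.src (Γ.lastEdge p1) then l1 (Γ.tgt ε) else 0) *
              (Real.sqrt (A * B) / L0 ^ 2) := by
          intro ε
          by_cases hε : Γ.src ε = Γ.src (Γ.lastEdge p1)
          · rw [if_pos hε, if_pos hε]
            have e1 : ∀ x : ℝ, d⁻¹ * (d * x / L0) = x / L0 := fun x => by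
              field_simp
            rw [e1, e1, div_mul_div_comm,
              ← Real.sqrt_mul (mul_nonneg (hl1 _).le (hl1 _).le),
              show A * l1 (Γ.tgt ε) * (l1 (Γ.tgt ε) * B) = (A * B) * (l1 (Γ.tgt ε)) ^ 2 by
                ring,
              Real.sqrt_mul (mul_nonneg (hl1 _).le (hl1 _).le), Real.sqrt_sq (hl1 _).le]
            ring
          · rw [if_neg hε, if_neg hε, zero_mul]
        rw [Finset.sum_congr rfl fun ε _ => hpt ε, ← Finset.sum_mul, hrow]
        rw [hL0]
        field_simp
      calc (∑ ε : Γ.E, if Γ.src ε = Γ.src (Γ.lastEdge p1) then C ε else 0)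
          = ((∑ ε : Γ.E, if Γ.src ε = Γ.src (Γ.lastEdge p1) then
              ((d⁻¹ * (d * Real.sqrt (A * l1 (Γ.tgt ε)) / L0)) *
               (d⁻¹ * (d * Real.sqrt (l1 (Γ.tgt ε) * B) / L0))) else 0 : ℝ) : ℂ) := by
            rw [Complex.ofReal_sum]
            refine Finset.sum_congr rfl fun ε _ => ?_
            rw [hCdef]
            by_cases hε : Γ.src ε = Γ.src (Γ.lastEdge p1)
            · rw [if_pos hε, if_pos hε]
            · rw [if_neg hε, if_neg hε, Complex.ofReal_zero]
        _ = ((d⁻¹ * (d * Real.sqrt (A * B) / L0) : ℝ) : ℂ) := by rw [hreal]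
        _ = (d : ℂ)⁻¹ * ((d * Real.sqrt (A * B) / L0 : ℝ) : ℂ) := by
            push_cast
            ring
  · funext q
    obtain ⟨⟨⟨a1, p1⟩, ⟨a2, p2⟩⟩, hq1, hq2, hq3⟩ := q
    show starRingEnd ℂ (((d : ℂ)⁻¹ • Γ.FJones m l0 l1 d n)
        ⟨((a2, p2), (a1, p1)), ⟨hq2, hq1, hq3.symm⟩⟩)
      = ((d : ℂ)⁻¹ • Γ.FJones m l0 l1 d n) ⟨((a1, p1), (a2, p2)), ⟨hq1, hq2, hq3⟩⟩
    erw [Pi.smul_apply, Pi.smul_apply, smul_eq_mul, smul_eq_mul, map_mul]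
    have hdconj : starRingEnd ℂ (d : ℂ)⁻¹ = (d : ℂ)⁻¹ := by
      rw [map_inv₀, Complex.conj_ofReal]
    rw [hdconj]
    congr 1
    have hsrc : Γ.src (Γ.lastEdge p2) = Γ.src (Γ.lastEdge p1) := by
      have h1 := Γ.pend_odd hn p1
      have h2 := Γ.pend_odd hn p2
      rw [hq3, h2] at h1
      exact Sum.inl.inj h1
    by_cases hC : Γ.FCond m n ⟨((a1, p1), (a2, p2)), ⟨hq1, hq2, hq3⟩⟩
    · have hC' : Γ.FCond m n ⟨((a2, p2), (a1, p1)), ⟨hq2, hq1, hq3.symm⟩⟩ := by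
        obtain ⟨h1, h2, h3⟩ := hC
        exact ⟨h1.symm, fun i hi => (h2 i hi).symm,
          fun i j hi hj => ⟨(h3 i j hi hj).2, (h3 i j hi hj).1⟩⟩
      rw [Γ.FJones_pos m l0 l1 d hn _ hC', Γ.FJones_pos m l0 l1 d hn _ hC,
        Complex.conj_ofReal]
      congr 1
      show d * Real.sqrt (l1 (Γ.tgt (Γ.lastEdge p2)) * l1 (Γ.tgt (Γ.lastEdge p1)))
          / l0 (Γ.src (Γ.lastEdge p2)) = _
      rw [hsrc, mul_comm (l1 (Γ.tgt (Γ.lastEdge p2)))]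
    · have hC' : ¬ Γ.FCond m n ⟨((a2, p2), (a1, p1)), ⟨hq2, hq1, hq3.symm⟩⟩ := by
        intro h
        obtain ⟨h1, h2, h3⟩ := h
        exact hC ⟨h1.symm, fun i hi => (h2 i hi).symm,
          fun i j hi hj => ⟨(h3 i j hi hj).2, (h3 i j hi hj).1⟩⟩
      rw [Γ.FJones_neg m l0 l1 d _ hC', Γ.FJones_neg m l0 l1 d _ hC, map_zero]
end
end

section
/- In the tower (B_n) of loop algebras of the augmented graph Γ̃, the relative commutant B₀' ∩ B_n has linear basis { Σ_{t(η)=s(ℓ₁)} [η ℓ₁ ℓ₂* η*] : ℓ₁, ℓ₂ paths of length n in Γ from even vertices with s(ℓ₁)=s(ℓ₂), t(ℓ₁)=t(ℓ₂) }, and the map sending this basis element to [ℓ₁ℓ₂*] is a *-algebra isomorphism from B₀' ∩ B_n onto the loop algebra G_{n,+}. -/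
noncomputable section

open scoped BigOperators

/-- The map `G_{n,+} → B_n` sending the loop `[ℓ₁ℓ₂*]` to
`∑_{t(η)=s(ℓ₁)} [ηℓ₁ℓ₂*η*]`. -/
def commMap (Γ : BGraph) (m : Γ.Vp → ℕ) (n : ℕ) (y : Γ.LoopAlg n) :
    Γ.BAlg m n := fun L =>
  if h : L.1.1.1 = L.1.2.1 then
    y ⟨(L.1.1.2, L.1.2.2), ⟨by rw [← L.2.1, ← L.2.2.1, h], L.2.2.2⟩⟩
  else 0

section Aux

variable (Γ : BGraph) (m : Γ.Vp → ℕ)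

theorem gpath_ext {n : ℕ} (p q : Γ.GPath n) (hf : p.1.2 = q.1.2)
    (he : Γ.pend p = Γ.pend q) : p = q := by
  cases n with
  | zero =>
    apply Subtype.ext
    apply Prod.ext
    · exact Sum.inl.inj he
    · exact hf
  | succ k =>
    apply Subtype.ext
    apply Prod.ext
    · have h1 := p.2.1 ⟨0, Nat.succ_pos k⟩ rfl
      have h2 := q.2.1 ⟨0, Nat.succ_pos k⟩ rfl
      rw [← h1, ← h2, hf]
    · exact hf

theorem path_ext_succ {k : ℕ} (p q : Γ.GPath (k+1)) (ht : Γ.trunc p = Γ.trunc q)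
    (hl : Γ.lastEdge p = Γ.lastEdge q) : p = q := by
  apply Subtype.ext
  apply Prod.ext
  · exact congrArg (fun r : Γ.GPath k => r.1.1) ht
  · funext i
    by_cases hi : (i : ℕ) < k
    · have h := congrFun (congrArg (fun r : Γ.GPath k => r.1.2) ht) ⟨(i : ℕ), hi⟩
      have hc : (Fin.castSucc ⟨(i : ℕ), hi⟩) = i := by ext; rfl
      simpa [BGraph.trunc, hc] using h
    · have hik : i = ⟨k, Nat.lt_succ_self k⟩ := by ext; have := i.isLt; simp; omega
      rw [hik]; exact hl

def mkPath0 (v : Γ.Vp) : Γ.GPath 0 :=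
  ⟨(v, fun i => i.elim0), ⟨fun i _ => i.elim0, fun i _ _ => i.elim0⟩⟩

def mkBLoop0 (η ρ : Γ.Aug m) (h : η.1 = ρ.1) : Γ.BLoop m 0 :=
  ⟨((η, mkPath0 Γ η.1), (ρ, mkPath0 Γ ρ.1)), ⟨rfl, rfl, congrArg Sum.inl h⟩⟩

theorem binclLe_eval {n : ℕ} (b : Γ.BAlg m 0) (L : Γ.BLoop m n) :
    Γ.binclLe m (Nat.zero_le n) b L =
      if h : L.1.1.2 = L.1.2.2 then
        b (mkBLoop0 Γ m L.1.1.1 L.1.2.1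
            (L.2.1.trans ((congrArg Γ.pstart h).trans L.2.2.1.symm)))
      else 0 := by
  induction n with
  | zero =>
    have hb : Γ.binclLe m (Nat.zero_le 0) b = b := Nat.leRecOn_self b
    rw [hb]
    have hpq : L.1.1.2 = L.1.2.2 := by
      apply gpath_ext Γ _ _ _ L.2.2.2
      funext i; exact i.elim0
    rw [dif_pos hpq]
    congr 1
    apply Subtype.ext
    have e1 : L.1.1.2 = mkPath0 Γ L.1.1.1.1 := by
      apply Subtype.ext
      apply Prod.ext
      · exact L.2.1.symm
      · funext i; exact i.elim0
    have e2 : L.1.2.2 = mkPath0 Γ L.1.2.1.1 := by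
      apply Subtype.ext
      apply Prod.ext
      · exact L.2.2.1.symm
      · funext i; exact i.elim0
    show L.1 = ((L.1.1.1, mkPath0 Γ L.1.1.1.1), (L.1.2.1, mkPath0 Γ L.1.2.1.1))
    rw [← e1, ← e2]
  | succ k ih =>
    have hb : Γ.binclLe m (Nat.zero_le (k+1)) b =
        Γ.bincl m (Γ.binclLe m (Nat.zero_le k) b) := Nat.leRecOn_succ (Nat.zero_le k) b
    rw [hb]
    show (if h : Γ.lastEdge L.1.1.2 = Γ.lastEdge L.1.2.2 then _ else 0) = _
    by_cases hl : Γ.lastEdge L.1.1.2 = Γ.lastEdge L.1.2.2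
    · rw [dif_pos hl]; erw [ih]
      by_cases hpq : L.1.1.2 = L.1.2.2
      · rw [dif_pos (congrArg Γ.trunc hpq), dif_pos hpq]
      · rw [dif_neg (fun ht => hpq (path_ext_succ Γ _ _ ht hl)), dif_neg hpq]
    · rw [dif_neg hl, dif_neg (fun hpq => hl (congrArg Γ.lastEdge hpq))]

end Aux
section Aux2

variable (Γ : BGraph) (m : Γ.Vp → ℕ)

theorem bmul_inclL {n : ℕ} (b : Γ.BAlg m 0) (x : Γ.BAlg m n) (L : Γ.BLoop m n) :
    Γ.bmul m (Γ.binclLe m (Nat.zero_le n) b) x L =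
      ∑ a : Γ.Aug m,
        if h : a.1 = Γ.pstart L.1.1.2 then
          b (mkBLoop0 Γ m L.1.1.1 a (L.2.1.trans h.symm)) *
          x ⟨((a, L.1.1.2), L.1.2), ⟨h, L.2.2.1, L.2.2.2⟩⟩
        else 0 := by
  show (∑ a : Γ.Aug m, ∑ p : Γ.GPath n, _) = _
  apply Finset.sum_congr rfl
  intro a _
  rw [Finset.sum_eq_single_of_mem L.1.1.2 (Finset.mem_univ _)]
  · by_cases hc : a.1 = Γ.pstart L.1.1.2
    · rw [dif_pos ⟨hc, rfl⟩, dif_pos hc]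
      congr 1
      erw [binclLe_eval]
      rw [dif_pos rfl]
    · rw [dif_neg (fun h => hc h.1), dif_neg hc]
  · intro p _ hp
    by_cases hc : a.1 = Γ.pstart p ∧ Γ.pend L.1.1.2 = Γ.pend p
    · rw [dif_pos hc]
      have hz : Γ.binclLe m (Nat.zero_le n) b
          ⟨(L.1.1, (a, p)), ⟨L.2.1, hc.1, hc.2⟩⟩ = 0 := by
        erw [binclLe_eval]
        exact dif_neg (fun h => hp h.symm)
      rw [hz, zero_mul]
    · exact dif_neg hc

theorem bmul_inclR {n : ℕ} (b : Γ.BAlg m 0) (x : Γ.BAlg m n) (L : Γ.BLoop m n) :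
    Γ.bmul m x (Γ.binclLe m (Nat.zero_le n) b) L =
      ∑ a : Γ.Aug m,
        if h : a.1 = Γ.pstart L.1.2.2 then
          x ⟨(L.1.1, (a, L.1.2.2)), ⟨L.2.1, h, L.2.2.2⟩⟩ *
          b (mkBLoop0 Γ m a L.1.2.1 (h.trans L.2.2.1.symm))
        else 0 := by
  show (∑ a : Γ.Aug m, ∑ p : Γ.GPath n, _) = _
  apply Finset.sum_congr rfl
  intro a _
  rw [Finset.sum_eq_single_of_mem L.1.2.2 (Finset.mem_univ _)]
  · by_cases hc : a.1 = Γ.pstart L.1.2.2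
    · rw [dif_pos ⟨hc, L.2.2.2⟩, dif_pos hc]
      congr 1
      erw [binclLe_eval]
      rw [dif_pos rfl]
    · rw [dif_neg (fun h => hc h.1), dif_neg hc]
  · intro p _ hp
    by_cases hc : a.1 = Γ.pstart p ∧ Γ.pend L.1.1.2 = Γ.pend p
    · rw [dif_pos hc]
      have hz : Γ.binclLe m (Nat.zero_le n) b
          ⟨((a, p), L.1.2), ⟨hc.1, L.2.2.1, hc.2.symm.trans L.2.2.2⟩⟩ = 0 := by
        erw [binclLe_eval]
        exact dif_neg hp
      rw [hz, mul_zero]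
    · exact dif_neg hc

end Aux2
section Aux3

variable (Γ : BGraph) (m : Γ.Vp → ℕ)

/-- A matrix unit of `B₀`. -/
def bUnit (η ρ : Γ.Aug m) : Γ.BAlg m 0 := fun M =>
  if M.1.1.1 = η ∧ M.1.2.1 = ρ then 1 else 0

theorem bUnit_mk (η ρ α β : Γ.Aug m) (h : α.1 = β.1) :
    bUnit Γ m η ρ (mkBLoop0 Γ m α β h) = if α = η ∧ β = ρ then 1 else 0 := rfl

theorem key' {n : ℕ} (x : Γ.BAlg m n)
    (hx : ∀ b : Γ.BAlg m 0,
      Γ.bmul m (Γ.binclLe m (Nat.zero_le n) b) x =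
      Γ.bmul m x (Γ.binclLe m (Nat.zero_le n) b))
    (η ρ : Γ.Aug m) (hv : η.1 = ρ.1) (L : Γ.BLoop m n) :
    (if h : L.1.1.1 = η ∧ ρ.1 = Γ.pstart L.1.1.2 then
       x ⟨((ρ, L.1.1.2), L.1.2), ⟨h.2, L.2.2.1, L.2.2.2⟩⟩ else 0) =
    (if h : L.1.2.1 = ρ ∧ η.1 = Γ.pstart L.1.2.2 then
       x ⟨(L.1.1, (η, L.1.2.2)), ⟨L.2.1, h.2, L.2.2.2⟩⟩ else 0) := by
  have h0 := congrFun (hx (bUnit Γ m η ρ)) L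
  rw [bmul_inclL, bmul_inclR] at h0
  have hL : (∑ a : Γ.Aug m,
      if h : a.1 = Γ.pstart L.1.1.2 then
        bUnit Γ m η ρ (mkBLoop0 Γ m L.1.1.1 a (L.2.1.trans h.symm)) *
        x ⟨((a, L.1.1.2), L.1.2), ⟨h, L.2.2.1, L.2.2.2⟩⟩
      else 0) =
      (if h : L.1.1.1 = η ∧ ρ.1 = Γ.pstart L.1.1.2 then
        x ⟨((ρ, L.1.1.2), L.1.2), ⟨h.2, L.2.2.1, L.2.2.2⟩⟩ else 0) := by
    rw [Finset.sum_eq_single_of_mem ρ (Finset.mem_univ _)]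
    · by_cases h2 : ρ.1 = Γ.pstart L.1.1.2
      · rw [dif_pos h2, bUnit_mk]
        by_cases h1 : L.1.1.1 = η
        · rw [if_pos ⟨h1, rfl⟩, one_mul, dif_pos ⟨h1, h2⟩]
        · rw [if_neg (fun hc => h1 hc.1), zero_mul,
            dif_neg (fun hc => h1 hc.1)]
      · rw [dif_neg h2, dif_neg (fun hc => h2 hc.2)]
    · intro a _ ha
      by_cases h2 : a.1 = Γ.pstart L.1.1.2
      · rw [dif_pos h2, bUnit_mk, if_neg (fun hc => ha hc.2), zero_mul]
      · exact dif_neg h2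
  have hR : (∑ a : Γ.Aug m,
      if h : a.1 = Γ.pstart L.1.2.2 then
        x ⟨(L.1.1, (a, L.1.2.2)), ⟨L.2.1, h, L.2.2.2⟩⟩ *
        bUnit Γ m η ρ (mkBLoop0 Γ m a L.1.2.1 (h.trans L.2.2.1.symm))
      else 0) =
      (if h : L.1.2.1 = ρ ∧ η.1 = Γ.pstart L.1.2.2 then
        x ⟨(L.1.1, (η, L.1.2.2)), ⟨L.2.1, h.2, L.2.2.2⟩⟩ else 0) := by
    rw [Finset.sum_eq_single_of_mem η (Finset.mem_univ _)]
    · by_cases h2 : η.1 = Γ.pstart L.1.2.2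
      · rw [dif_pos h2, bUnit_mk]
        by_cases h1 : L.1.2.1 = ρ
        · rw [if_pos ⟨rfl, h1⟩, mul_one, dif_pos ⟨h1, h2⟩]
        · rw [if_neg (fun hc => h1 hc.2), mul_zero,
            dif_neg (fun hc => h1 hc.1)]
      · rw [dif_neg h2, dif_neg (fun hc => h2 hc.2)]
    · intro a _ ha
      by_cases h2 : a.1 = Γ.pstart L.1.2.2
      · rw [dif_pos h2, bUnit_mk, if_neg (fun hc => ha hc.1), mul_zero]
      · exact dif_neg h2
  rw [hL, hR] at h0
  exact h0

end Aux3
/-- The relative commutant `B₀' ∩ B_n` has linear basis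
`{∑_{t(η)=s(ℓ₁)} [ηℓ₁ℓ₂*η*]}` indexed by the loops `[ℓ₁ℓ₂*]` of `G_{n,+}`,
and `[ℓ₁ℓ₂*] ↦ ∑_η [ηℓ₁ℓ₂*η*]` is a `*`-algebra isomorphism of `G_{n,+}` onto
`B₀' ∩ B_n`: it is linear, injective, multiplicative, `*`-preserving, and its
range is exactly the commutant of `B₀` in `B_n`. -/
theorem statement19 (Γ : BGraph) (hconn : Γ.Conn) (m : Γ.Vp → ℕ)
    (hm : ∀ v, 0 < m v) (n : ℕ) :
    Function.Injective (commMap Γ m n) ∧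
    (∀ (c : ℂ) (x y : Γ.LoopAlg n),
      commMap Γ m n (c • x + y) = c • commMap Γ m n x + commMap Γ m n y) ∧
    (∀ x y : Γ.LoopAlg n,
      commMap Γ m n (Γ.lmul x y) = Γ.bmul m (commMap Γ m n x) (commMap Γ m n y)) ∧
    (∀ x : Γ.LoopAlg n,
      commMap Γ m n (Γ.lstar x) = Γ.bstar m (commMap Γ m n x)) ∧
    Set.range (commMap Γ m n) =
      {x : Γ.BAlg m n | ∀ b : Γ.BAlg m 0,
        Γ.bmul m (Γ.binclLe m (Nat.zero_le n) b) x =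
        Γ.bmul m x (Γ.binclLe m (Nat.zero_le n) b)} := by
  refine ⟨?_, ?_, ?_, ?_, ?_⟩
  · -- injectivity
    intro x y hxy
    funext q
    have hL : Γ.BLoopOk m n
        ((⟨⟨Γ.pstart q.1.1, ⟨0, hm _⟩⟩, q.1.1⟩, ⟨⟨Γ.pstart q.1.1, ⟨0, hm _⟩⟩, q.1.2⟩)) :=
      ⟨rfl, q.2.1, q.2.2⟩
    have h := congrFun hxy ⟨_, hL⟩
    rw [show commMap Γ m n x ⟨_, hL⟩ = x ⟨(q.1.1, q.1.2), ⟨q.2.1, q.2.2⟩⟩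
        from dif_pos rfl,
      show commMap Γ m n y ⟨_, hL⟩ = y ⟨(q.1.1, q.1.2), ⟨q.2.1, q.2.2⟩⟩
        from dif_pos rfl] at h
    exact h
  · -- linearity
    intro c x y
    funext L
    simp only [commMap, Pi.add_apply, Pi.smul_apply, smul_eq_mul]
    split
    · rfl
    · simp
  · -- multiplicativity
    intro x y
    funext L
    by_cases hab : L.1.1.1 = L.1.2.1
    · have hss : L.1.1.1.1 = Γ.pstart L.1.2.2 := by rw [hab]; exact L.2.2.1
      rw [show commMap Γ m n (Γ.lmul x y) L =
          Γ.lmul x y ⟨(L.1.1.2, L.1.2.2), ⟨L.2.1.symm.trans hss, L.2.2.2⟩⟩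
          from dif_pos hab]
      show (∑ p : Γ.GPath n, _) = (∑ a : Γ.Aug m, ∑ p : Γ.GPath n, _)
      rw [Finset.sum_eq_single_of_mem L.1.1.1 (Finset.mem_univ _) ?z1]
      case z1 =>
        intro a _ ha
        apply Finset.sum_eq_zero
        intro p _
        by_cases hc : a.1 = Γ.pstart p ∧ Γ.pend L.1.1.2 = Γ.pend p
        · rw [dif_pos hc]
          rw [show commMap Γ m n x ⟨(L.1.1, (a, p)), ⟨L.2.1, hc.1, hc.2⟩⟩ = 0
              from dif_neg (fun h => ha h.symm), zero_mul]
        · exact dif_neg hc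
      apply Finset.sum_congr rfl
      intro p _
      by_cases hc : L.1.1.1.1 = Γ.pstart p ∧ Γ.pend L.1.1.2 = Γ.pend p
      · rw [dif_pos hc, dif_pos (⟨L.2.1.symm.trans hc.1, hc.2⟩ :
          Γ.pstart L.1.1.2 = Γ.pstart p ∧ Γ.pend L.1.1.2 = Γ.pend p)]
        rw [show commMap Γ m n x ⟨(L.1.1, (L.1.1.1, p)), ⟨L.2.1, hc.1, hc.2⟩⟩ =
            x ⟨(L.1.1.2, p), ⟨L.2.1.symm.trans hc.1, hc.2⟩⟩ from dif_pos rfl]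
        rw [show commMap Γ m n y
            ⟨((L.1.1.1, p), L.1.2), ⟨hc.1, L.2.2.1, hc.2.symm.trans L.2.2.2⟩⟩ =
            y ⟨(p, L.1.2.2), ⟨hc.1.symm.trans hss, hc.2.symm.trans L.2.2.2⟩⟩
            from dif_pos hab]
      · rw [dif_neg hc, dif_neg (fun h => hc ⟨L.2.1.trans h.1, h.2⟩)]
    · rw [show commMap Γ m n (Γ.lmul x y) L = 0 from dif_neg hab]
      symm
      apply Finset.sum_eq_zero
      intro a _
      apply Finset.sum_eq_zero
      intro p _
      by_cases hc : a.1 = Γ.pstart p ∧ Γ.pend L.1.1.2 = Γ.pend p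
      · rw [dif_pos hc]
        by_cases haη : L.1.1.1 = a
        · rw [show commMap Γ m n y
              ⟨((a, p), L.1.2), ⟨hc.1, L.2.2.1, hc.2.symm.trans L.2.2.2⟩⟩ = 0
              from dif_neg (fun h => hab (haη.trans h)), mul_zero]
        · rw [show commMap Γ m n x ⟨(L.1.1, (a, p)), ⟨L.2.1, hc.1, hc.2⟩⟩ = 0
              from dif_neg haη, zero_mul]
      · exact dif_neg hc
  · -- star
    intro x
    funext L
    have hb : Γ.bstar m (commMap Γ m n x) L =
        starRingEnd ℂ (commMap Γ m n x
          ⟨(L.1.2, L.1.1), ⟨L.2.2.1, L.2.1, L.2.2.2.symm⟩⟩) := rfl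
    rw [hb]
    by_cases hab : L.1.1.1 = L.1.2.1
    · have hss : L.1.1.1.1 = Γ.pstart L.1.2.2 := by rw [hab]; exact L.2.2.1
      rw [show commMap Γ m n (Γ.lstar x) L =
          Γ.lstar x ⟨(L.1.1.2, L.1.2.2), ⟨L.2.1.symm.trans hss, L.2.2.2⟩⟩
          from dif_pos hab]
      rw [show commMap Γ m n x ⟨(L.1.2, L.1.1), ⟨L.2.2.1, L.2.1, L.2.2.2.symm⟩⟩ =
          x ⟨(L.1.2.2, L.1.1.2), ⟨hss.symm.trans L.2.1, L.2.2.2.symm⟩⟩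
          from dif_pos hab.symm]
      rfl
    · rw [show commMap Γ m n (Γ.lstar x) L = 0 from dif_neg hab]
      rw [show commMap Γ m n x ⟨(L.1.2, L.1.1), ⟨L.2.2.1, L.2.1, L.2.2.2.symm⟩⟩ = 0
          from dif_neg (fun h => hab h.symm), map_zero]
  · -- range
    ext x
    constructor
    · rintro ⟨y, rfl⟩ b
      funext L
      rw [bmul_inclL, bmul_inclR]
      rw [Finset.sum_eq_single_of_mem L.1.2.1 (Finset.mem_univ _) ?z2]
      case z2 =>
        intro a _ ha
        by_cases h2 : a.1 = Γ.pstart L.1.1.2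
        · rw [dif_pos h2]
          rw [show commMap Γ m n y
              ⟨((a, L.1.1.2), L.1.2), ⟨h2, L.2.2.1, L.2.2.2⟩⟩ = 0
              from dif_neg ha, mul_zero]
        · exact dif_neg h2
      rw [Finset.sum_eq_single_of_mem L.1.1.1 (Finset.mem_univ _) ?z3]
      case z3 =>
        intro a _ ha
        by_cases h2 : a.1 = Γ.pstart L.1.2.2
        · rw [dif_pos h2]
          rw [show commMap Γ m n y
              ⟨(L.1.1, (a, L.1.2.2)), ⟨L.2.1, h2, L.2.2.2⟩⟩ = 0
              from dif_neg (fun h => ha h.symm), zero_mul]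
        · exact dif_neg h2
      by_cases hc : L.1.2.1.1 = Γ.pstart L.1.1.2
      · have hc' : L.1.1.1.1 = Γ.pstart L.1.2.2 :=
          (L.2.1.trans hc.symm).trans L.2.2.1
        rw [dif_pos hc, dif_pos hc']
        have hvv : Γ.pstart L.1.1.2 = Γ.pstart L.1.2.2 := L.2.1.symm.trans hc'
        rw [show commMap Γ m n y
            ⟨((L.1.2.1, L.1.1.2), L.1.2), ⟨hc, L.2.2.1, L.2.2.2⟩⟩ =
            y ⟨(L.1.1.2, L.1.2.2), ⟨hvv, L.2.2.2⟩⟩ from dif_pos rfl]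
        rw [show commMap Γ m n y
            ⟨(L.1.1, (L.1.1.1, L.1.2.2)), ⟨L.2.1, hc', L.2.2.2⟩⟩ =
            y ⟨(L.1.1.2, L.1.2.2), ⟨hvv, L.2.2.2⟩⟩ from dif_pos rfl]
        rw [mul_comm]
      · rw [dif_neg hc, dif_neg (fun h =>
          hc ((L.2.2.1.trans (h.symm.trans L.2.1)) :
            L.1.2.1.1 = Γ.pstart L.1.1.2))]
    · intro hx
      set yf : Γ.LoopAlg n := fun q => x ⟨((⟨Γ.pstart q.1.1, ⟨0, hm _⟩⟩, q.1.1),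
          (⟨Γ.pstart q.1.1, ⟨0, hm _⟩⟩, q.1.2)), ⟨rfl, q.2.1, q.2.2⟩⟩ with hyf
      refine ⟨yf, ?_⟩
      funext L
      by_cases hab : L.1.1.1 = L.1.2.1
      · have hss : Γ.pstart L.1.1.2 = Γ.pstart L.1.2.2 :=
          L.2.1.symm.trans (by rw [hab]; exact L.2.2.1)
        have hv : L.1.2.1.1 = (⟨Γ.pstart L.1.1.2, ⟨0, hm _⟩⟩ : Γ.Aug m).1 := by
          rw [← hab]; exact L.2.1
        have hk := key' Γ m x hx L.1.2.1 ⟨Γ.pstart L.1.1.2, ⟨0, hm _⟩⟩ hv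
          ⟨((L.1.1.1, L.1.1.2), (⟨Γ.pstart L.1.1.2, ⟨0, hm _⟩⟩, L.1.2.2)),
            ⟨L.2.1, hss, L.2.2.2⟩⟩
        erw [dif_pos (⟨hab, rfl⟩ : L.1.1.1 = L.1.2.1 ∧
            (⟨Γ.pstart L.1.1.2, ⟨0, hm _⟩⟩ : Γ.Aug m).1 = Γ.pstart L.1.1.2),
          dif_pos (⟨rfl, L.2.2.1⟩ :
            (⟨Γ.pstart L.1.1.2, ⟨0, hm _⟩⟩ : Γ.Aug m) = ⟨Γ.pstart L.1.1.2, ⟨0, hm _⟩⟩ ∧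
            L.1.2.1.1 = Γ.pstart L.1.2.2)] at hk
        rw [show commMap Γ m n yf L =
            yf ⟨(L.1.1.2, L.1.2.2), ⟨hss, L.2.2.2⟩⟩ from dif_pos hab]
        exact hk
      · have hk := key' Γ m x hx L.1.1.1 L.1.1.1 rfl L
        rw [dif_pos (⟨rfl, L.2.1⟩ : L.1.1.1 = L.1.1.1 ∧ L.1.1.1.1 = Γ.pstart L.1.1.2),
          dif_neg (fun hc => hab hc.1.symm)] at hk
        rw [show commMap Γ m n yf L = 0 from dif_neg hab]
        exact hk.symm
end
end
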